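/- Let f = min_{i∈I} f_i on open X ⊆ ℝⁿ with I finite and each f_i Hadamard directionally differentiable at x̄ with sublinear derivative. Then ⋃_{p∈S, f'(x̄;p)>0} ⋂_{i∈I(x̄,p)} Argmax_{v∈∂f_i(x̄)} ⟨v,p⟩ ⊆ Limsup_{x→x̄, f(x)>f(x̄)} ∂f(x), where S is the unit sphere and Limsup denotes the outer (Painlevé–Kuratowski) limit of Fréchet subdifferentials: the set of all limits y of sequences y_k ∈ ∂f(x_k) with x_k → x̄ and f(x_k) > f(x̄). -/

import Mathlib

open Filter Topology Set Metric
open scoped RealInnerProductSpace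

noncomputable section

/-- `n`-dimensional Euclidean space. -/
abbrev En (n : ℕ) := EuclideanSpace ℝ (Fin n)

/-- `d` is the Hadamard directional derivative map of `f` at `x`:
for each direction `p`, `(f (x + t • p') - f x)/t → d p` as `t ↓ 0`, `p' → p`. -/
def HadamardDD {n : ℕ} (f : En n → ℝ) (x : En n) (d : En n → ℝ) : Prop :=
  ∀ p : En n,
    Tendsto (fun q : ℝ × En n => (f (x + q.1 • q.2) - f x) / q.1)
      ((𝓝[>] (0 : ℝ)) ×ˢ 𝓝 p) (𝓝 (d p))

/-- The Fréchet subdifferential of `f` at `x`. -/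
def FSubdiff {n : ℕ} (f : En n → ℝ) (x : En n) : Set (En n) :=
  {v | ∀ ε > (0 : ℝ), ∀ᶠ y in 𝓝 x, f y - f x - ⟪v, y - x⟫ ≥ -ε * ‖y - x‖}

/-- The outer (Painlevé–Kuratowski) limit of Fréchet subdifferentials of `f`
along sequences `x_k → xb` with `f x_k > f xb`. -/
def OuterLim {n : ℕ} (f : En n → ℝ) (xb : En n) : Set (En n) :=
  {y | ∃ xk yk : ℕ → En n, Tendsto xk atTop (𝓝 xb) ∧ (∀ k, f xb < f (xk k)) ∧
    (∀ k, yk k ∈ FSubdiff f (xk k)) ∧ Tendsto yk atTop (𝓝 y)}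

/-- A Fréchet subgradient is dominated by the Hadamard directional derivative. -/
lemma fsubdiff_le_dd {n : ℕ} {g : En n → ℝ} {x : En n} {d : En n → ℝ} {v : En n}
    (hdd : HadamardDD g x d) (hv : v ∈ FSubdiff g x) (u : En n) : ⟪v, u⟫ ≤ d u := by
  have key : ∀ ε : ℝ, 0 < ε → ⟪v, u⟫ - ε * ‖u‖ ≤ d u := by
    intro ε hε
    have h : Tendsto (fun t : ℝ => ((t, u) : ℝ × En n)) (𝓝[>] (0:ℝ)) ((𝓝[>] (0:ℝ)) ×ˢ 𝓝 u) :=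
      tendsto_id.prodMk tendsto_const_nhds
    have h2 := (hdd u).comp h
    have hmem := hv ε hε
    have hx : Tendsto (fun t : ℝ => x + t • u) (𝓝[>] (0:ℝ)) (𝓝 x) := by
      have h : Tendsto (fun t : ℝ => x + t • u) (𝓝 (0:ℝ)) (𝓝 (x + (0:ℝ) • u)) :=
        (tendsto_id.smul_const u).const_add x
      simpa using h.mono_left nhdsWithin_le_nhds
    have hev : ∀ᶠ t in 𝓝[>] (0:ℝ), ⟪v, u⟫ - ε * ‖u‖ ≤ (g (x + t • u) - g x) / t := by
      filter_upwards [hx.eventually hmem, self_mem_nhdsWithin] with t ht ht0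
      have ht0 : (0:ℝ) < t := ht0
      rw [ge_iff_le, add_sub_cancel_left, real_inner_smul_right, norm_smul,
        Real.norm_eq_abs, abs_of_pos ht0] at ht
      rw [le_div_iff₀ ht0]
      nlinarith
    exact ge_of_tendsto h2 hev
  rcases eq_or_lt_of_le (norm_nonneg u) with h | h
  · have hu0 : u = 0 := by simpa using h.symm
    have h1 := key 1 one_pos
    simpa [hu0] using h1
  · by_contra hlt
    push_neg at hlt
    have h1 := key ((⟪v, u⟫ - d u) / ‖u‖ / 2) (by have := sub_pos.mpr hlt; positivity)
    have h2 : (⟪v, u⟫ - d u) / ‖u‖ / 2 * ‖u‖ = (⟪v, u⟫ - d u) / 2 := by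
      field_simp
    rw [h2] at h1
    linarith

/-- A minimizer of `f - ⟪y,·⟫ + s‖·-c‖²` interior to a ball gives a Fréchet subgradient. -/
lemma fsubdiff_of_min {n : ℕ} {f : En n → ℝ} {y c xt : En n} {s ρ : ℝ} (hs : 0 < s)
    (hxt : ‖xt - c‖ < ρ)
    (hmin : ∀ z ∈ Metric.closedBall c ρ,
      f xt - ⟪y, xt⟫ + s * ‖xt - c‖ ^ 2 ≤ f z - ⟪y, z⟫ + s * ‖z - c‖ ^ 2) :
    y - (2 * s) • (xt - c) ∈ FSubdiff f xt := by
  intro ε hε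
  have hball : Metric.ball xt (min (ρ - ‖xt - c‖) (ε / s)) ∈ 𝓝 xt := by
    apply Metric.ball_mem_nhds
    have : 0 < ε / s := div_pos hε hs
    simp [lt_min_iff, this, hxt]
  filter_upwards [hball] with z hz
  have hz' : dist z xt < min (ρ - ‖xt - c‖) (ε / s) := hz
  have hzd : ‖z - xt‖ < min (ρ - ‖xt - c‖) (ε / s) := by
    rwa [← dist_eq_norm]
  have hzball : z ∈ Metric.closedBall c ρ := by
    rw [Metric.mem_closedBall, dist_eq_norm]
    have h1 : ‖z - c‖ ≤ ‖z - xt‖ + ‖xt - c‖ := norm_sub_le_norm_sub_add_norm_sub z xt c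
    have h2 : ‖z - xt‖ < ρ - ‖xt - c‖ := lt_of_lt_of_le hzd (min_le_left _ _)
    linarith
  have hm := hmin z hzball
  have hsq : ‖z - c‖ ^ 2 = ‖z - xt‖ ^ 2 + 2 * ⟪z - xt, xt - c⟫ + ‖xt - c‖ ^ 2 := by
    have h := norm_add_sq_real (z - xt) (xt - c)
    rw [sub_add_sub_cancel] at h
    linarith
  have hinner : ⟪y - (2 * s) • (xt - c), z - xt⟫
      = ⟪y, z - xt⟫ - 2 * s * ⟪xt - c, z - xt⟫ := by
    rw [inner_sub_left, real_inner_smul_left]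
  have hyz : ⟪y, z⟫ - ⟪y, xt⟫ = ⟪y, z - xt⟫ := by
    rw [inner_sub_right]
  have hcomm : ⟪z - xt, xt - c⟫ = ⟪xt - c, z - xt⟫ := real_inner_comm _ _
  have hεs : s * ‖z - xt‖ ≤ ε := by
    have h2 : ‖z - xt‖ ≤ ε / s := le_of_lt (lt_of_lt_of_le hzd (min_le_right _ _))
    rw [← le_div_iff₀' hs]
    exact h2
  have hnn : 0 ≤ ‖z - xt‖ := norm_nonneg _
  rw [ge_iff_le, hinner]
  nlinarith [sq_nonneg (‖z - xt‖)]

/-- Uniform version of the Hadamard directional derivative on compact direction sets. -/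
lemma hadamard_uniform {n : ℕ} {g : En n → ℝ} {x : En n} {d : En n → ℝ}
    (hdd : HadamardDD g x d) (hd : Continuous d) {K : Set (En n)} (hK : IsCompact K)
    {ε : ℝ} (hε : 0 < ε) :
    ∃ δ > 0, ∀ t : ℝ, 0 < t → t < δ → ∀ u ∈ K, |g (x + t • u) - g x - t * d u| ≤ ε * t := by
  rcases K.eq_empty_or_nonempty with hKe | hKne
  · exact ⟨1, one_pos, fun t ht htδ u hu => by simp [hKe] at hu⟩
  -- for each u₀ ∈ K get δ(u₀) and an open neighborhood V(u₀)
  have key : ∀ u₀ : En n, ∃ δ > (0:ℝ), ∃ V : Set (En n), IsOpen V ∧ u₀ ∈ V ∧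
      ∀ t : ℝ, 0 < t → t < δ → ∀ u ∈ V, |(g (x + t • u) - g x) / t - d u| < ε := by
    intro u₀
    have h1 : ∀ᶠ q : ℝ × En n in (𝓝[>] (0:ℝ)) ×ˢ 𝓝 u₀,
        |(g (x + q.1 • q.2) - g x) / q.1 - d u₀| < ε / 2 := by
      have := (hdd u₀).eventually (eventually_abs_sub_lt (d u₀) (half_pos hε))
      simpa [abs_sub_comm] using this
    rw [Filter.eventually_prod_iff] at h1
    obtain ⟨pa, hpa, pb, hpb, himp⟩ := h1
    rw [eventually_nhdsWithin_iff] at hpa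
    rcases Metric.eventually_nhds_iff.mp hpa with ⟨δ, hδ, hδP⟩
    have h2 : ∀ᶠ u in 𝓝 u₀, pb u ∧ |d u - d u₀| < ε / 2 := by
      refine hpb.and ?_
      have := (hd.continuousAt (x := u₀)).eventually (eventually_abs_sub_lt (d u₀) (half_pos hε))
      simpa [abs_sub_comm] using this
    rcases _root_.eventually_nhds_iff.mp h2 with ⟨V, hV, hVopen, hu₀V⟩
    refine ⟨δ, hδ, V, hVopen, hu₀V, fun t ht htδ u hu => ?_⟩
    have hpat : pa t := by
      apply hδP _ ht
      simp [Real.dist_eq, abs_of_pos ht]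
      linarith [abs_of_pos ht]
    have h3 := himp hpat (hV u hu).1
    have h4 := (hV u hu).2
    calc |(g (x + t • u) - g x) / t - d u|
        ≤ |(g (x + t • u) - g x) / t - d u₀| + |d u₀ - d u| := abs_sub_le _ _ _
      _ < ε / 2 + ε / 2 := by
          rw [abs_sub_comm (d u₀)]
          exact add_lt_add h3 h4
      _ = ε := add_halves ε
  choose δf hδf V hVopen hmemV hV using key
  obtain ⟨F, hFK, hcover⟩ := hK.elim_nhds_subcover V (fun u hu => (hVopen u).mem_nhds (hmemV u))
  have hFne : F.Nonempty := by
    by_contra hFe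
    rw [Finset.not_nonempty_iff_eq_empty] at hFe
    rcases hKne with ⟨u, hu⟩
    have := hcover hu
    simp [hFe] at this
  refine ⟨F.inf' hFne δf, ?_, fun t ht htδ u hu => ?_⟩
  · exact (Finset.lt_inf'_iff _).mpr fun i _ => hδf i
  · have := hcover hu
    simp only [Set.mem_iUnion] at this
    obtain ⟨u₀, hu₀F, huV⟩ := this
    have htδ' : t < δf u₀ := lt_of_lt_of_le htδ (Finset.inf'_le _ hu₀F)
    have h5 := hV u₀ t ht htδ' u huV
    have h6 : |g (x + t • u) - g x - t * d u| = |(g (x + t • u) - g x) / t - d u| * t := by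
      rw [← abs_of_pos ht, ← abs_mul, abs_of_pos ht]
      congr 1
      field_simp
    rw [h6]
    exact mul_le_mul_of_nonneg_right h5.le ht.le
set_option maxHeartbeats 1600000 in
/-- the union over unit directions `p` with `f'(xb;p) > 0` of
`⋂_{i ∈ I(xb,p)} Argmax_{v ∈ ∂f_i(xb)} ⟪v,p⟫` is contained in the outer limit of
Fréchet subdifferentials of `f` along `x → xb`, `f x > f xb`. -/
theorem union_subset_outerLim {n : ℕ} {ι : Type*} [Fintype ι]
    (X : Set (En n)) (hX : IsOpen X)
    (fi : ι → En n → ℝ) (f : En n → ℝ)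
    (hf : ∀ x : En n, IsLeast (Set.range fun i => fi i x) (f x))
    (xb : En n) (hxb : xb ∈ X)
    (hcont : ∀ i, Continuous (fi i))
    (di : ι → En n → ℝ) (hdd : ∀ i, HadamardDD (fi i) xb (di i))
    (hconv : ∀ i, ConvexOn ℝ Set.univ (di i))
    (hpos : ∀ i (p : En n) (c : ℝ), 0 < c → di i (c • p) = c * di i p) :
    {y : En n | ∃ p : En n, ‖p‖ = 1 ∧
        (∀ i : ι, fi i xb = f xb → 0 < di i p) ∧
        (∀ i : ι,
          (fi i xb = f xb ∧ ∀ i' : ι, fi i' xb = f xb → di i p ≤ di i' p) →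
            y ∈ FSubdiff (fi i) xb ∧ ⟪y, p⟫ = di i p)} ⊆ OuterLim f xb := by
  classical
  intro y hy
  obtain ⟨p, hp, hpos', hmin'⟩ := hy
  obtain ⟨i0, hi0⟩ := (hf xb).1
  haveI : Nonempty ι := ⟨i0⟩
  -- the active index set
  set A : Finset ι := Finset.univ.filter (fun i => fi i xb = f xb) with hA_def
  have hmemA : ∀ i, i ∈ A ↔ fi i xb = f xb := by
    intro i; simp [hA_def]
  have hA : A.Nonempty := ⟨i0, (hmemA i0).mpr hi0⟩
  -- f is the finite min of the fi
  have hfeq : ∀ x, f x = Finset.univ.inf' Finset.univ_nonempty (fun i => fi i x) := by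
    intro x
    apply le_antisymm
    · obtain ⟨j, hj, hje⟩ := Finset.exists_mem_eq_inf' Finset.univ_nonempty (fun i => fi i x)
      rw [hje]
      exact (hf x).2 ⟨j, rfl⟩
    · obtain ⟨j, hj⟩ := (hf x).1
      exact le_trans (Finset.inf'_le _ (Finset.mem_univ j)) (le_of_eq hj)
  have hfcont : Continuous f := by
    have h : Continuous (fun x => Finset.univ.inf' Finset.univ_nonempty (fun i => fi i x)) :=
      Continuous.finset_inf'_apply _ (fun i _ => hcont i)
    have : f = fun x => Finset.univ.inf' Finset.univ_nonempty (fun i => fi i x) := funext hfeq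
    rw [this]; exact h
  have hdic : ∀ i, Continuous (di i) := by
    intro i
    have h := (hconv i).continuousOn isOpen_univ
    exact continuousOn_univ.mp h
  -- the min of the directional derivatives over the active set
  set dmin : En n → ℝ := fun u => A.inf' hA (fun i => di i u) with hdmin_def
  have hdminc : Continuous dmin :=
    Continuous.finset_inf'_apply _ (fun i _ => hdic i)
  obtain ⟨istar, histar, hstar⟩ := A.exists_min_image (fun i => di i p) hA
  obtain ⟨hysub, hyip⟩ :=
    hmin' istar ⟨(hmemA istar).mp histar, fun i' h' => hstar i' ((hmemA i').mpr h')⟩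
  set α := di istar p with hα_def
  have hα : 0 < α := hpos' istar ((hmemA istar).mp histar)
  have hdminp : dmin p = α :=
    le_antisymm (Finset.inf'_le _ histar) (Finset.le_inf' _ _ hstar)
  -- margin radius: near p, every active derivative dominates ⟪y,·⟫
  have hper : ∀ i : ι, ∃ r > (0:ℝ), i ∈ A → ∀ u ∈ Metric.closedBall p r, ⟪y, u⟫ ≤ di i u := by
    intro i
    by_cases hiA : i ∈ A
    · by_cases hmini : ∀ i' : ι, fi i' xb = f xb → di i p ≤ di i' p
      · obtain ⟨hsub, _⟩ := hmin' i ⟨(hmemA i).mp hiA, hmini⟩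
        exact ⟨1, one_pos, fun _ u _ => fsubdiff_le_dd (hdd i) hsub u⟩
      · push_neg at hmini
        obtain ⟨i', hi'A, hi'lt⟩ := hmini
        have hgt : ⟪y, p⟫ < di i p := by
          have h1 : α ≤ di i' p := hstar i' ((hmemA i').mpr hi'A)
          rw [hyip]
          linarith
        have hopen : IsOpen {u : En n | ⟪y, u⟫ < di i u} := by
          have hc : Continuous (fun u : En n => di i u - ⟪y, u⟫) :=
            (hdic i).sub ((continuous_const.inner continuous_id))
          have : {u : En n | ⟪y, u⟫ < di i u} = (fun u : En n => di i u - ⟪y, u⟫) ⁻¹' (Set.Ioi 0) := by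
            ext u; simp [sub_pos]
          rw [this]
          exact isOpen_Ioi.preimage hc
        obtain ⟨r', hr', hball⟩ := Metric.isOpen_iff.mp hopen p hgt
        refine ⟨r' / 2, by positivity, fun _ u hu => ?_⟩
        have : u ∈ Metric.ball p r' := lt_of_le_of_lt (Metric.mem_closedBall.mp hu) (by linarith)
        exact (hball this).le
    · exact ⟨1, one_pos, fun h => absurd h hiA⟩
  choose rf hrfpos hrf using hper
  set r0 : ℝ := A.inf' hA rf with hr0_def
  have hr0pos : 0 < r0 := (Finset.lt_inf'_iff _).mpr fun i _ => hrfpos i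
  have hr0 : ∀ u ∈ Metric.closedBall p r0, ∀ i ∈ A, ⟪y, u⟫ ≤ di i u := by
    intro u hu i hiA
    apply hrf i hiA
    exact Metric.closedBall_subset_closedBall (Finset.inf'_le _ hiA) hu
  have hr0dmin : ∀ u ∈ Metric.closedBall p r0, ⟪y, u⟫ ≤ dmin u := by
    intro u hu
    exact Finset.le_inf' _ _ fun i hiA => hr0 u hu i hiA
  -- bound on the derivatives over the compact ball
  have hcptK : IsCompact (Metric.closedBall p r0) := isCompact_closedBall p r0
  choose C hC using fun i => hcptK.exists_bound_of_continuousOn (hdic i).continuousOn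
  set D : ℝ := Finset.univ.sup' Finset.univ_nonempty C with hD_def
  have hCD : ∀ i, C i ≤ D := fun i => Finset.le_sup' _ (Finset.mem_univ i)
  have hDbound : ∀ i, ∀ u ∈ Metric.closedBall p r0, |di i u| ≤ D := by
    intro i u hu
    calc |di i u| = ‖di i u‖ := rfl
      _ ≤ C i := hC i u hu
      _ ≤ D := hCD i
  have hpK : p ∈ Metric.closedBall p r0 := Metric.mem_closedBall_self hr0pos.le
  have hD0 : 0 ≤ D := le_trans (abs_nonneg _) (hDbound istar p hpK)
  -- gap of inactive indices
  set B : Finset ι := Finset.univ \ A with hB_def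
  have hβex : ∃ β > (0:ℝ), ∀ i ∈ B, β ≤ fi i xb - f xb := by
    by_cases hB : B.Nonempty
    · refine ⟨B.inf' hB (fun i => fi i xb - f xb), ?_, fun i hi => Finset.inf'_le _ hi⟩
      rw [gt_iff_lt, Finset.lt_inf'_iff]
      intro i hi
      have h1 : f xb ≤ fi i xb := (hf xb).2 ⟨i, rfl⟩
      have h2 : fi i xb ≠ f xb := by
        intro he
        rw [hB_def, Finset.mem_sdiff] at hi
        exact hi.2 ((hmemA i).mpr he)
      have := lt_of_le_of_ne h1 (Ne.symm h2)
      linarith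
    · exact ⟨1, one_pos, fun i hi => absurd ⟨i, hi⟩ hB⟩
  obtain ⟨β, hβpos, hβ⟩ := hβex
  -- uniform expansion of f in directions near p
  have funif : ∀ ε : ℝ, 0 < ε → ∃ δ > 0, ∀ t : ℝ, 0 < t → t < δ →
      ∀ u ∈ Metric.closedBall p r0, |f (xb + t • u) - f xb - t * dmin u| ≤ ε * t := by
    intro ε hε
    choose δf hδfpos hδf using fun i => hadamard_uniform (hdd i) (hdic i) hcptK hε
    refine ⟨min (Finset.univ.inf' Finset.univ_nonempty δf) (β / (2 * D + 2 * ε + 1)),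
      lt_min ((Finset.lt_inf'_iff _).mpr fun i _ => hδfpos i) (by positivity),
      fun t ht htδ u hu => ?_⟩
    have htδ' : ∀ i, t < δf i := fun i =>
      lt_of_lt_of_le (lt_of_lt_of_le htδ (min_le_left _ _)) (Finset.inf'_le _ (Finset.mem_univ i))
    have htβ : t * (2 * D) ≤ β := by
      have h1 : t ≤ β / (2 * D + 2 * ε + 1) := le_of_lt (lt_of_lt_of_le htδ (min_le_right _ _))
      rw [le_div_iff₀ (by positivity)] at h1
      nlinarith
    have hQ : ∀ i, |fi i (xb + t • u) - fi i xb - t * di i u| ≤ ε * t :=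
      fun i => hδf i t ht (htδ' i) u hu
    have hdminD : |dmin u| ≤ D := by
      obtain ⟨j, hjA, hje⟩ := Finset.exists_mem_eq_inf' hA (fun i => di i u)
      rw [hdmin_def]
      simp only
      rw [hje]
      exact hDbound j u hu
    rw [abs_le]
    constructor
    · -- lower bound
      obtain ⟨m, hm⟩ := (hf (xb + t • u)).1
      have hQm := hQ m
      rw [abs_le] at hQm
      by_cases hmA : m ∈ A
      · have h1 : fi m xb = f xb := (hmemA m).mp hmA
        have h2 : dmin u ≤ di m u := Finset.inf'_le _ hmA
        have h3 : fi m xb + t * di m u - ε * t ≤ fi m (xb + t • u) := by linarith [hQm.1]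
        have h4 : t * dmin u ≤ t * di m u := mul_le_mul_of_nonneg_left h2 ht.le
        rw [← hm]
        simp only
        linarith
      · have hmB : m ∈ B := by
          rw [hB_def, Finset.mem_sdiff]
          exact ⟨Finset.mem_univ m, hmA⟩
        have h1 : β ≤ fi m xb - f xb := hβ m hmB
        have h2 : -D ≤ di m u := neg_le_of_abs_le (hDbound m u hu)
        have h3 : dmin u ≤ D := le_of_abs_le hdminD
        have h4 : t * dmin u - t * di m u ≤ t * (2 * D) := by nlinarith
        rw [← hm]
        simp only
        nlinarith [hQm.1]
    · -- upper bound
      obtain ⟨j, hjA, hje⟩ := Finset.exists_mem_eq_inf' hA (fun i => di i u)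
      have h1 : f (xb + t • u) ≤ fi j (xb + t • u) := (hf (xb + t • u)).2 ⟨j, rfl⟩
      have hQj := hQ j
      rw [abs_le] at hQj
      have h2 : fi j xb = f xb := (hmemA j).mp hjA
      have h3 : dmin u = di j u := hje
      rw [h3]
      linarith [hQj.2]
  -- the per-k construction
  have main : ∀ k : ℕ, ∃ xt v : En n, dist xt xb ≤ 2/((k:ℝ)+1) ∧ f xb < f xt ∧
      v ∈ FSubdiff f xt ∧ dist v y ≤ 2/((k:ℝ)+1) := by
    intro k
    have hk1 : (0:ℝ) < 1/((k:ℝ)+1) := by positivity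
    set r : ℝ := min (min r0 (1/((k:ℝ)+1))) (α/(2*‖y‖+2)) with hr_def
    have hrpos : 0 < r := lt_min (lt_min hr0pos hk1) (by positivity)
    have hr_r0 : r ≤ r0 := le_trans (min_le_left _ _) (min_le_left _ _)
    have hr_k : r ≤ 1/((k:ℝ)+1) := le_trans (min_le_left _ _) (min_le_right _ _)
    have hr_y : ‖y‖ * r ≤ α/2 := by
      have h1 : r ≤ α/(2*‖y‖+2) := min_le_right _ _
      rw [le_div_iff₀ (by positivity)] at h1
      nlinarith [norm_nonneg y, hrpos.le]
    set ε : ℝ := min (r^2/4) (α/4) with hε_def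
    have hεpos : 0 < ε := lt_min (by positivity) (by positivity)
    have hε1 : ε ≤ r^2/4 := min_le_left _ _
    have hε2 : ε ≤ α/4 := min_le_right _ _
    obtain ⟨δ, hδpos, hδ⟩ := funif ε hεpos
    set t : ℝ := min (δ/2) (1/((k:ℝ)+1)) with ht_def
    have ht : 0 < t := lt_min (by positivity) hk1
    have htδ : t < δ := lt_of_le_of_lt (min_le_left _ _) (by linarith)
    have htk : t ≤ 1/((k:ℝ)+1) := min_le_right _ _
    set c : En n := xb + t • p with hc_def
    have hgcont : Continuous (fun z : En n => f z - ⟪y, z⟫ + (1/t) * ‖z - c‖^2) := by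
      apply Continuous.add
      · exact hfcont.sub (continuous_const.inner continuous_id)
      · exact continuous_const.mul ((continuous_id.sub continuous_const).norm.pow 2)
    obtain ⟨xt, hxtmem, hxtmin⟩ := (isCompact_closedBall c (t*r)).exists_isMinOn
      ⟨c, Metric.mem_closedBall_self (by positivity)⟩ hgcont.continuousOn
    rw [isMinOn_iff] at hxtmin
    set u : En n → En n := fun z => p + t⁻¹ • (z - c) with hu_def
    have hid : ∀ z, xb + t • (u z) = z := by
      intro z
      rw [hu_def]
      simp only
      rw [smul_add, smul_smul, mul_inv_cancel₀ ht.ne', one_smul, ← add_assoc, ← hc_def]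
      abel
    have hnormu : ∀ z, ‖u z - p‖ = t⁻¹ * ‖z - c‖ := by
      intro z
      rw [hu_def]
      simp only [add_sub_cancel_left]
      rw [norm_smul, Real.norm_eq_abs, abs_of_pos (inv_pos.mpr ht)]
    have hmemK : ∀ z ∈ Metric.closedBall c (t*r), u z ∈ Metric.closedBall p r0 := by
      intro z hz
      rw [Metric.mem_closedBall, dist_eq_norm] at *
      rw [hnormu z]
      calc t⁻¹ * ‖z - c‖ ≤ t⁻¹ * (t*r) := mul_le_mul_of_nonneg_left hz (inv_pos.mpr ht).le
        _ = r := by field_simp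
        _ ≤ r0 := hr_r0
    have hQ : ∀ z ∈ Metric.closedBall c (t*r), |f z - f xb - t * dmin (u z)| ≤ ε * t := by
      intro z hz
      have h := hδ t ht htδ (u z) (hmemK z hz)
      rwa [hid z] at h
    have hinner : ∀ z, ⟪y, z⟫ = ⟪y, xb⟫ + t * ⟪y, u z⟫ := by
      intro z
      conv_lhs => rw [← hid z]
      rw [inner_add_right, real_inner_smul_right]
    have hucp : u c = p := by rw [hu_def]; simp
    have hcxb : ‖c - xb‖ = t := by
      rw [hc_def]
      simp only [add_sub_cancel_left]
      rw [norm_smul, Real.norm_eq_abs, abs_of_pos ht, hp, mul_one]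
    clear hr_def hε_def ht_def hu_def hc_def
    clear_value u c t ε r
    have hQc := hQ c (Metric.mem_closedBall_self (by positivity))
    rw [hucp, hdminp] at hQc
    have hgc : f c - ⟪y, c⟫ + (1/t) * ‖c - c‖^2 ≤ f xb - ⟪y, xb⟫ + ε * t := by
      have h1 : f c ≤ f xb + t * α + ε * t := by
        have h := (abs_le.mp hQc).2; linarith
      have h2 : ⟪y, c⟫ = ⟪y, xb⟫ + t * α := by
        rw [hinner c, hucp, hyip]
      rw [h2]
      simp only [sub_self, norm_zero, ne_eq]
      rw [zero_pow (by norm_num), mul_zero]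
      linarith
    have hxtc : ‖xt - c‖ ≤ t * r := by
      rw [Metric.mem_closedBall, dist_eq_norm] at hxtmem; exact hxtmem
    have hxtmem' : xt ∈ Metric.closedBall c (t*r) := by
      rw [Metric.mem_closedBall, dist_eq_norm]; exact hxtc
    have hydmin : ⟪y, u xt⟫ ≤ dmin (u xt) := hr0dmin _ (hmemK xt hxtmem')
    have hQxt := hQ xt hxtmem'
    have hglow : f xb - ⟪y, xb⟫ - ε * t + (1/t) * ‖xt - c‖^2
        ≤ f xt - ⟪y, xt⟫ + (1/t) * ‖xt - c‖^2 := by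
      have h1 : f xb + t * dmin (u xt) - ε * t ≤ f xt := by
        have h := (abs_le.mp hQxt).1; linarith
      have h2 := hinner xt
      have h3 : t * ⟪y, u xt⟫ ≤ t * dmin (u xt) := mul_le_mul_of_nonneg_left hydmin ht.le
      linarith
    have hmin_c := hxtmin c (Metric.mem_closedBall_self (by positivity))
    have hint : ‖xt - c‖ < t * r := by
      have h1 : (1/t) * ‖xt - c‖^2 ≤ 2 * (ε * t) := by linarith
      by_contra hge
      push_neg at hge
      have h3 : (t*r)^2 ≤ ‖xt - c‖^2 := by nlinarith [norm_nonneg (xt - c)]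
      have h4 : (1/t) * (t*r)^2 = t * r^2 := by field_simp
      have h5 : (1/t) * (t*r)^2 ≤ (1/t) * ‖xt - c‖^2 :=
        mul_le_mul_of_nonneg_left h3 (by positivity)
      nlinarith
    have hvsub : y - (2 * (1/t)) • (xt - c) ∈ FSubdiff f xt := by
      apply fsubdiff_of_min (by positivity) hint
      intro z hz
      exact hxtmin z hz
    have hfgt : f xb < f xt := by
      have h1 : f xb + t * dmin (u xt) - ε * t ≤ f xt := by
        have h := (abs_le.mp hQxt).1; linarith
      have h2 : α - ‖y‖ * r ≤ ⟪y, u xt⟫ := by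
        have h3 : ⟪y, u xt⟫ = ⟪y, p⟫ + ⟪y, u xt - p⟫ := by
          rw [← inner_add_right]; congr 1; abel
        have h4 : |⟪y, u xt - p⟫| ≤ ‖y‖ * ‖u xt - p‖ := abs_real_inner_le_norm _ _
        have h5 : ‖u xt - p‖ ≤ r := by
          rw [hnormu]
          calc t⁻¹ * ‖xt - c‖ ≤ t⁻¹ * (t*r) := mul_le_mul_of_nonneg_left hxtc (inv_pos.mpr ht).le
            _ = r := by field_simp
        have h6 : ‖y‖ * ‖u xt - p‖ ≤ ‖y‖ * r := mul_le_mul_of_nonneg_left h5 (norm_nonneg y)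
        have h7 := neg_le_of_abs_le h4
        rw [h3, hyip]
        linarith
      have h10 : α/2 ≤ dmin (u xt) := by linarith [hr_y, hydmin]
      have h11 : t * (α/2) ≤ t * dmin (u xt) := mul_le_mul_of_nonneg_left h10 ht.le
      have h12 : ε * t ≤ (α/4) * t := mul_le_mul_of_nonneg_right hε2 ht.le
      nlinarith
    refine ⟨xt, y - (2 * (1/t)) • (xt - c), ?_, hfgt, hvsub, ?_⟩
    · rw [dist_eq_norm]
      have h1 : ‖xt - xb‖ ≤ ‖xt - c‖ + ‖c - xb‖ := norm_sub_le_norm_sub_add_norm_sub _ _ _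
      have h2 : ‖c - xb‖ = t := hcxb
      have hk2 : (1:ℝ)/((k:ℝ)+1) ≤ 1 := by
        rw [div_le_one (by positivity)]
        simp
      have h3 : r ≤ 1 := le_trans hr_k hk2
      have h4 : t * r ≤ t * 1 := mul_le_mul_of_nonneg_left h3 ht.le
      have h5 : (2:ℝ)/((k:ℝ)+1) = 2 * (1/((k:ℝ)+1)) := by ring
      rw [h5]
      calc ‖xt - xb‖ ≤ t*r + t := by rw [h2] at h1; linarith
        _ ≤ 2 * t := by linarith
        _ ≤ 2 * (1/((k:ℝ)+1)) := by linarith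
    · rw [dist_eq_norm, sub_sub_cancel_left, norm_neg, norm_smul, Real.norm_eq_abs,
        abs_of_pos (by positivity : (0:ℝ) < 2 * (1/t))]
      have h5 : (2:ℝ)/((k:ℝ)+1) = 2 * (1/((k:ℝ)+1)) := by ring
      rw [h5]
      calc 2*(1/t) * ‖xt - c‖ ≤ 2*(1/t)*(t*r) :=
            mul_le_mul_of_nonneg_left hxtc (by positivity)
        _ = 2*r := by field_simp
        _ ≤ 2 * (1/((k:ℝ)+1)) := by linarith
  choose xk vk h1 h2 h3 h4 using main
  have hb : Tendsto (fun k : ℕ => 2/((k:ℝ)+1)) atTop (𝓝 0) := by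
    have h := tendsto_one_div_add_atTop_nhds_zero_nat.const_mul (2:ℝ)
    rw [mul_zero] at h
    have he : (fun k : ℕ => 2 * (1/((k:ℝ)+1))) = fun k : ℕ => 2/((k:ℝ)+1) := by
      funext k; ring
    rwa [he] at h
  refine ⟨xk, vk, ?_, h2, h3, ?_⟩
  · rw [tendsto_iff_dist_tendsto_zero]
    exact squeeze_zero (fun k => dist_nonneg) h1 hb
  · rw [tendsto_iff_dist_tendsto_zero]
    exact squeeze_zero (fun k => dist_nonneg) h4 hb
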